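/- Lower tail bound for the negative binomial distribution (Lemma on NegBin tails, part 2): Let r ≥ 1 be an integer, p ∈ (0,1], and let X = X_1 + ... + X_r be the sum of r independent geometric random variables, each with success probability p. Then P(X ≤ r/(2p)) ≤ exp(-r/6). -/

import Mathlib

open MeasureTheory ProbabilityTheory Real

/-- Lower tail bound for the negative binomial distribution: the sum of `r`
independent geometric random variables (success probability `p`, values in the
positive integers) is at most `r/(2p)` with probability at most `exp(-r/6)`. -/
theorem negbin_lower_tail
    {Ω : Type*} [MeasurableSpace Ω] (μ : Measure Ω) [IsProbabilityMeasure μ]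
    (r : ℕ) (hr : 1 ≤ r) (p : ℝ) (hp0 : 0 < p) (hp1 : p ≤ 1)
    (X : Fin r → Ω → ℕ)
    (hmeas : ∀ i, Measurable (X i))
    (hindep : iIndepFun X μ)
    (hgeom : ∀ i, ∀ k : ℕ, 1 ≤ k →
      μ {ω | X i ω = k} = ENNReal.ofReal ((1 - p) ^ (k - 1) * p)) :
    μ {ω | ∑ i, (X i ω : ℝ) ≤ (r : ℝ) / (2 * p)}
      ≤ ENNReal.ofReal (Real.exp (-(r : ℝ) / 6)) := by
  have h1p : (0:ℝ) < 1 + p := by linarith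
  set t : ℝ := -Real.log (1 + p) with ht_def
  have ht : t ≤ 0 := neg_nonpos.mpr (Real.log_nonneg (by linarith))
  set Y : Fin r → Ω → ℝ := fun i ω => (X i ω : ℝ) with hY_def
  have hYmeas : ∀ i, Measurable (Y i) := fun i =>
    measurable_from_top.comp (hmeas i)
  have hindepY : iIndepFun Y μ :=
    hindep.comp (fun _ => (Nat.cast : ℕ → ℝ)) (fun _ => measurable_from_top)
  -- exp t = 1/(1+p)
  have hexpt : Real.exp t = 1 / (1 + p) := by
    rw [ht_def, Real.exp_neg, Real.exp_log h1p, one_div]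
  -- per-variable integrability
  have hint : ∀ i, Integrable (fun ω => Real.exp (t * Y i ω)) μ := by
    intro i
    refine Integrable.mono' (integrable_const 1)
      (((hYmeas i).const_mul t).exp.aestronglyMeasurable) (ae_of_all _ fun ω => ?_)
    rw [Real.norm_of_nonneg (Real.exp_pos _).le]
    refine Real.exp_le_one_iff.mpr (mul_nonpos_of_nonpos_of_nonneg ht ?_)
    exact Nat.cast_nonneg _
  -- X i = 0 has measure zero
  have hzero : ∀ i, μ {ω | X i ω = 0} = 0 := by
    intro i
    have hdisj : Pairwise (Function.onFun Disjoint fun k => {ω | X i ω = k}) := by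
      intro a b hab
      exact Set.disjoint_left.mpr fun ω ha hb => hab (ha ▸ hb ▸ rfl)
    have hmeasset : ∀ k : ℕ, MeasurableSet {ω | X i ω = k} := fun k =>
      hmeas i (measurableSet_singleton k)
    have huniv : (⋃ k : ℕ, {ω | X i ω = k}) = Set.univ := by
      ext ω; simp
    have hsum : ∑' k : ℕ, μ {ω | X i ω = k} = 1 := by
      rw [← measure_iUnion hdisj hmeasset, huniv, measure_univ]
    have htail : ∑' k : ℕ, μ {ω | X i ω = k + 1} = 1 := by
      have heq : ∀ k : ℕ, μ {ω | X i ω = k + 1}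
          = ENNReal.ofReal ((1 - p) ^ k * p) := by
        intro k
        simpa using hgeom i (k + 1) (Nat.le_add_left 1 k)
      have hsummable : Summable (fun k : ℕ => (1 - p) ^ k * p) :=
        (summable_geometric_of_lt_one (by linarith) (by linarith)).mul_right p
      have hre : ∑' k : ℕ, (1 - p) ^ k * p = 1 := by
        rw [tsum_mul_right, tsum_geometric_of_lt_one (by linarith) (by linarith),
          show (1:ℝ) - (1 - p) = p by ring, inv_mul_cancel₀ hp0.ne']
      calc ∑' k : ℕ, μ {ω | X i ω = k + 1}
          = ∑' k : ℕ, ENNReal.ofReal ((1 - p) ^ k * p) := tsum_congr heq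
        _ = ENNReal.ofReal (∑' k : ℕ, (1 - p) ^ k * p) :=
            (ENNReal.ofReal_tsum_of_nonneg
              (fun k => mul_nonneg (pow_nonneg (by linarith) k) hp0.le) hsummable).symm
        _ = 1 := by rw [hre, ENNReal.ofReal_one]
    have hsplit : ∑' k : ℕ, μ {ω | X i ω = k}
        = μ {ω | X i ω = 0} + ∑' k : ℕ, μ {ω | X i ω = k + 1} :=
      tsum_eq_zero_add' ENNReal.summable
    rw [hsplit, htail] at hsum
    calc μ {ω | X i ω = 0} = μ {ω | X i ω = 0} + 1 - 1 :=
          (ENNReal.add_sub_cancel_right ENNReal.one_ne_top).symm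
      _ = 0 := by rw [hsum]; simp
  -- mgf of each Y i equals 1/2
  have hmgf : ∀ i, mgf (Y i) μ t = 1 / 2 := by
    intro i
    have hmap : ∀ k : ℕ, (μ.map (X i)) {k} = μ {ω | X i ω = k} := by
      intro k
      rw [Measure.map_apply (hmeas i) (measurableSet_singleton k)]
      rfl
    have : IsProbabilityMeasure (μ.map (X i)) := Measure.isProbabilityMeasure_map (hmeas i).aemeasurable
    have hg_int : Integrable (fun k : ℕ => Real.exp (t * k)) (μ.map (X i)) := by
      refine Integrable.mono' (integrable_const 1)
        (measurable_from_top.aestronglyMeasurable) (ae_of_all _ fun k => ?_)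
      rw [Real.norm_of_nonneg (Real.exp_pos _).le]
      exact Real.exp_le_one_iff.mpr (mul_nonpos_of_nonpos_of_nonneg ht (Nat.cast_nonneg _))
    have h1 : mgf (Y i) μ t = ∑' k : ℕ, ((μ.map (X i)) {k}).toReal * Real.exp (t * k) := by
      have hmg : mgf (Y i) μ t = ∫ k, Real.exp (t * (k : ℝ)) ∂(μ.map (X i)) := by
        rw [mgf, integral_map (hmeas i).aemeasurable
          ((measurable_from_top (f := fun k : ℕ => Real.exp (t * (k:ℝ)))).aestronglyMeasurable)]
      rw [hmg, integral_countable' hg_int]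
      simp [smul_eq_mul]
      rfl
    rw [h1]
    have hterm : ∀ k : ℕ, ((μ.map (X i)) {k}).toReal * Real.exp (t * k)
        = (fun k : ℕ => (if k = 0 then 0 else (1 - p) ^ (k - 1) * p) * (1 / (1 + p)) ^ k) k := by
      intro k
      rw [hmap, show Real.exp (t * k) = Real.exp t ^ k by
        rw [mul_comm]; exact Real.exp_nat_mul t k, hexpt]
      cases k with
      | zero => simp [hzero i]
      | succ n =>
        rw [hgeom i (n+1) (Nat.le_add_left 1 n), ENNReal.toReal_ofReal (mul_nonneg (pow_nonneg (by linarith : (0:ℝ) ≤ 1 - p) _) hp0.le)]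
        simp
    rw [tsum_congr hterm]
    have hsplit : ∑' k : ℕ, (if k = 0 then 0 else (1 - p) ^ (k - 1) * p) * (1 / (1 + p)) ^ k
        = ∑' n : ℕ, (1 - p) ^ n * p * (1 / (1 + p)) ^ (n + 1) := by
      rw [Summable.tsum_eq_zero_add]
      · simp
      · refine Summable.of_nonneg_of_le (fun k => ?_) (fun k => ?_)
          (summable_geometric_of_lt_one (r := 1/(1+p)) (by positivity) (by
            rw [div_lt_one h1p]; linarith))
        · rcases Nat.eq_zero_or_pos k with h | h
          · simp [h]
          · have hk0 : k ≠ 0 := h.ne'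
            simp only [hk0, if_false]
            exact mul_nonneg (mul_nonneg (pow_nonneg (by linarith : (0:ℝ) ≤ 1 - p) _) hp0.le) (by positivity)
        · rcases Nat.eq_zero_or_pos k with h | h
          · simp only [h, if_true, reduceIte, zero_mul, pow_zero]
            norm_num
          · have hk : k ≠ 0 := h.ne'
            simp only [hk, if_false]
            have h1 : (1 - p) ^ (k - 1) * p ≤ 1 := by
              have : (1 - p) ^ (k - 1) ≤ 1 :=
                pow_le_one₀ (by linarith) (by linarith)
              nlinarith
            calc (1 - p) ^ (k - 1) * p * (1 / (1 + p)) ^ k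
                ≤ 1 * (1 / (1 + p)) ^ k := by
                  apply mul_le_mul_of_nonneg_right h1 (by positivity)
              _ = (1 / (1 + p)) ^ k := one_mul _
    rw [hsplit]
    have : ∀ n : ℕ, (1 - p) ^ n * p * (1 / (1 + p)) ^ (n + 1)
        = ((1 - p) / (1 + p)) ^ n * (p / (1 + p)) := by
      intro n
      rw [pow_succ]
      field_simp
      rw [← mul_pow, mul_one_div]
    rw [tsum_congr this, tsum_mul_right,
      tsum_geometric_of_lt_one (div_nonneg (by linarith) h1p.le)
        (by rw [div_lt_one h1p]; linarith)]
    rw [show 1 - (1 - p) / (1 + p) = (2 * p) / (1 + p) by field_simp; ring]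
    field_simp
  -- Chernoff
  set ε : ℝ := (r : ℝ) / (2 * p) with hε_def
  have hint_sum : Integrable (fun ω => Real.exp (t * (∑ i, Y i) ω)) μ :=
    hindepY.integrable_exp_mul_sum hYmeas (fun i _ => hint i)
  have hcher := measure_le_le_exp_mul_mgf (X := ∑ i, Y i) (μ := μ) ε ht hint_sum
  have hsetEq : {ω | (∑ i, Y i) ω ≤ ε} = {ω | ∑ i, (X i ω : ℝ) ≤ (r : ℝ) / (2 * p)} := by
    ext ω; simp [hY_def, Finset.sum_apply, hε_def]
  rw [hsetEq] at hcher
  have hmgfsum : mgf (∑ i, Y i) μ t = (1 / 2) ^ r := by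
    rw [hindepY.mgf_sum hYmeas]
    simp [hmgf]
  rw [hmgfsum] at hcher
  -- final numeric inequality
  have hfinal : Real.exp (-t * ε) * (1 / 2) ^ r ≤ Real.exp (-(r : ℝ) / 6) := by
    have hlog : Real.log (1 + p) ≤ p := by
      have := Real.log_le_sub_one_of_pos h1p
      linarith
    have h2 : -t * ε ≤ (r : ℝ) / 2 := by
      rw [ht_def, neg_neg, hε_def]
      rw [div_eq_mul_inv, ← mul_assoc]
      have hrp : (0:ℝ) ≤ (r:ℝ) := Nat.cast_nonneg r
      calc Real.log (1 + p) * (r : ℝ) * (2 * p)⁻¹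
          ≤ p * (r : ℝ) * (2 * p)⁻¹ := by
            apply mul_le_mul_of_nonneg_right (mul_le_mul_of_nonneg_right hlog hrp)
            positivity
        _ = (r : ℝ) / 2 := by field_simp
    have h3 : ((1:ℝ) / 2) ^ r ≤ Real.exp (-(2:ℝ)/3) ^ r := by
      apply pow_le_pow_left₀ (by norm_num)
      rw [show (1:ℝ)/2 = Real.exp (-Real.log 2) by
        rw [Real.exp_neg, Real.exp_log two_pos]; norm_num]
      apply Real.exp_le_exp.mpr
      have := Real.log_two_gt_d9
      linarith
    calc Real.exp (-t * ε) * (1 / 2) ^ r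
        ≤ Real.exp ((r : ℝ) / 2) * Real.exp (-(2:ℝ)/3) ^ r := by
          apply mul_le_mul (Real.exp_le_exp.mpr h2) h3 (by positivity) (Real.exp_pos _).le
      _ = Real.exp ((r : ℝ) / 2 + (r : ℝ) * (-(2:ℝ)/3)) := by
          rw [← Real.exp_nat_mul, ← Real.exp_add]
      _ ≤ Real.exp (-(r : ℝ) / 6) := by
          apply Real.exp_le_exp.mpr; ring_nf; linarith [Nat.cast_nonneg (α := ℝ) r]
  calc μ {ω | ∑ i, (X i ω : ℝ) ≤ (r : ℝ) / (2 * p)}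
      = ENNReal.ofReal (μ {ω | ∑ i, (X i ω : ℝ) ≤ (r : ℝ) / (2 * p)}).toReal := by
        rw [ENNReal.ofReal_toReal (measure_ne_top _ _)]
    _ ≤ ENNReal.ofReal (Real.exp (-(r : ℝ) / 6)) :=
        ENNReal.ofReal_le_ofReal (hcher.trans hfinal)
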